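/- Let 0 < ε < 1/4, let D ⊆ ℝ be a nonempty finite set that is an ε-natural fragment up to a ∈ ℝ, and let f : ℝ → ℝ satisfy |f(d)| < ε for all d ∈ D. Then E := {d + f(d) : d ∈ D} is a 3ε-natural fragment up to a. -/

import Mathlib

/-- `D` is an `ε`-natural fragment up to `a`: successors differ from steps of `1` by
less than `ε`, and `D` comes within `ε` of both `0` and `a`. -/
def IsENatFragment (ε a : ℝ) (D : Set ℝ) : Prop :=
  (∀ d ∈ D, (∃ e ∈ D, d < e) →
    ∀ s, IsLeast {e ∈ D | d < e} s → |s - d - 1| < ε) ∧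
  (∃ d₀ ∈ D, |d₀| < ε) ∧ (∃ d₁ ∈ D, |d₁ - a| < ε)

theorem perturbed_eNatFragment (ε a : ℝ) (D : Set ℝ) (f : ℝ → ℝ)
    (hε : 0 < ε) (hε4 : ε < 1/4) (hfin : D.Finite) (hne : D.Nonempty)
    (hD : IsENatFragment ε a D) (hf : ∀ d ∈ D, |f d| < ε) :
    IsENatFragment (3 * ε) a ((fun d => d + f d) '' D) := by
  obtain ⟨hstep, ⟨d0, hd0D, hd0⟩, ⟨d1, hd1D, hd1⟩⟩ := hD
  -- existence of least element above d
  have hleast : ∀ d ∈ D, ∀ d' ∈ D, d < d' → ∃ s, IsLeast {e ∈ D | d < e} s := by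
    intro d hd d' hd' hdd'
    have hSfin : {e ∈ D | d < e}.Finite := hfin.subset fun x hx => hx.1
    have hSne : {e ∈ D | d < e}.Nonempty := ⟨d', hd', hdd'⟩
    obtain ⟨s, hs, hmin⟩ := Set.Finite.exists_minimalFor id _ hSfin hSne
    refine ⟨s, hs, fun x hx => ?_⟩
    rcases le_or_gt s x with h | h
    · exact h
    · exact hmin hx h.le
  have hgap : ∀ d ∈ D, ∀ d' ∈ D, d < d' → 1 - ε < d' - d := by
    intro d hd d' hd' hdd'
    obtain ⟨s, hsmem, hsle⟩ := hleast d hd d' hd' hdd'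
    have h1 := hstep d hd ⟨d', hd', hdd'⟩ s ⟨hsmem, hsle⟩
    have h2 : s ≤ d' := hsle ⟨hd', hdd'⟩
    have h3 := abs_lt.mp h1
    linarith
  have hmono : ∀ d ∈ D, ∀ d' ∈ D, d < d' → d + f d < d' + f d' := by
    intro d hd d' hd' h
    have h1 := hgap d hd d' hd' h
    have h2 := abs_lt.mp (hf d hd)
    have h3 := abs_lt.mp (hf d' hd')
    linarith
  refine ⟨?_, ⟨d0 + f d0, ⟨d0, hd0D, rfl⟩, ?_⟩, ⟨d1 + f d1, ⟨d1, hd1D, rfl⟩, ?_⟩⟩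
  · rintro x ⟨d, hd, rfl⟩ ⟨y, ⟨d'', hd'', rfl⟩, hxy⟩ s hs
    simp only at hxy ⊢
    have hdd'' : d < d'' := by
      rcases lt_trichotomy d d'' with h | h | h
      · exact h
      · subst h; exact absurd hxy (lt_irrefl _)
      · exact absurd (hmono d'' hd'' d hd h) (not_lt.mpr hxy.le)
    obtain ⟨t, htmem, htle⟩ := hleast d hd d'' hd'' hdd''
    have hstepD := hstep d hd ⟨d'', hd'', hdd''⟩ t ⟨htmem, htle⟩
    have hst : s = t + f t := by
      have h1 : s ≤ t + f t :=
        hs.2 ⟨⟨t, htmem.1, rfl⟩, hmono d hd t htmem.1 htmem.2⟩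
      obtain ⟨⟨u, hu, rfl⟩, hgu⟩ := hs.1
      have hdu : d < u := by
        rcases lt_trichotomy d u with h | h | h
        · exact h
        · subst h; exact absurd hgu (lt_irrefl _)
        · exact absurd (hmono u hu d hd h) (not_lt.mpr hgu.le)
      have htu : t ≤ u := htle ⟨hu, hdu⟩
      rcases eq_or_lt_of_le htu with h | h
      · subst h; rfl
      · exact le_antisymm h1 (hmono t htmem.1 u hu h).le
    subst hst
    have h2 := abs_lt.mp (hf d hd)
    have h3 := abs_lt.mp (hf t htmem.1)
    have h4 := abs_lt.mp hstepD
    rw [abs_lt]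
    constructor <;> linarith
  · have := abs_lt.mp hd0
    have := abs_lt.mp (hf d0 hd0D)
    rw [abs_lt]; constructor <;> linarith
  · have := abs_lt.mp hd1
    have := abs_lt.mp (hf d1 hd1D)
    rw [abs_lt]; constructor <;> linarith
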